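/- Let A be a Banach algebra and I a closed two-sided ideal of A with a bounded approximate identity. If both I and A/I are ideally amenable, then A is ideally amenable: for every closed two-sided ideal J of A, every continuous derivation D: A → J* is inner. -/

import Mathlib

open ContinuousLinearMap Filter Topology

namespace Paper

structure Bimod (A : Type*) [NormedRing A] [NormedAlgebra ℂ A]
    (X : Type*) [NormedAddCommGroup X] [NormedSpace ℂ X] where
  l : A → X →L[ℂ] X
  r : A → X →L[ℂ] X
  l_mul : ∀ a b x, l (a * b) x = l a (l b x)
  r_mul : ∀ a b x, r (a * b) x = r b (r a x)
  lr : ∀ a b x, l a (r b x) = r b (l a x)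

variable {A : Type*} [NormedRing A] [NormedAlgebra ℂ A]
variable {X : Type*} [NormedAddCommGroup X] [NormedSpace ℂ X]

noncomputable def Bimod.dual (M : Bimod A X) : Bimod A (X →L[ℂ] ℂ) where
  l a := (compL ℂ X X ℂ).flip (M.r a)
  r a := (compL ℂ X X ℂ).flip (M.l a)
  l_mul a b f := by ext x; simp [M.r_mul]
  r_mul a b f := by ext x; simp [M.l_mul]
  lr a b f := by ext x; simp [M.lr]

def IsDerivation (M : Bimod A X) (D : A →L[ℂ] X) : Prop :=
  ∀ a b, D (a * b) = M.l a (D b) + M.r b (D a)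

def IsInner (M : Bimod A X) (D : A →L[ℂ] X) : Prop :=
  ∃ x, ∀ a, D a = M.l a x - M.r a x

noncomputable def Bimod.restrict (M : Bimod A X) (Y : Submodule ℂ X)
    (hl : ∀ a, ∀ y ∈ Y, M.l a y ∈ Y) (hr : ∀ a, ∀ y ∈ Y, M.r a y ∈ Y) :
    Bimod A Y where
  l a := ((M.l a).comp Y.subtypeL).codRestrict Y fun y => hl a y y.2
  r a := ((M.r a).comp Y.subtypeL).codRestrict Y fun y => hr a y y.2
  l_mul a b y := Subtype.ext (M.l_mul a b y)
  r_mul a b y := Subtype.ext (M.r_mul a b y)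
  lr a b y := Subtype.ext (M.lr a b y)

noncomputable def algBimod (A : Type*) [NormedRing A] [NormedAlgebra ℂ A] : Bimod A A where
  l a := ContinuousLinearMap.mul ℂ A a
  r a := (ContinuousLinearMap.mul ℂ A).flip a
  l_mul a b x := mul_assoc a b x
  r_mul a b x := (mul_assoc x a b).symm
  lr a b x := (mul_assoc a x b).symm

noncomputable def idealBimod (I : Submodule ℂ A)
    (hL : ∀ a, ∀ x ∈ I, a * x ∈ I) (hR : ∀ a, ∀ x ∈ I, x * a ∈ I) :
    Bimod A I where
  l a := ((ContinuousLinearMap.mul ℂ A a).comp I.subtypeL).codRestrict I fun x => hL a x x.2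
  r a := (((ContinuousLinearMap.mul ℂ A).flip a).comp I.subtypeL).codRestrict I fun x => hR a x x.2
  l_mul a b x := Subtype.ext (mul_assoc a b (x : A))
  r_mul a b x := Subtype.ext (mul_assoc (x : A) a b).symm
  lr a b x := Subtype.ext (mul_assoc a (x : A) b).symm

/-- Left multiplication by $a$ as an operator on a subspace $K$ invariant under it. -/
noncomputable def lmulS (K : Submodule ℂ A) (a : A) (h : ∀ y ∈ K, a * y ∈ K) :
    ↥K →L[ℂ] ↥K :=
  ((ContinuousLinearMap.mul ℂ A a).comp K.subtypeL).codRestrict K fun y => h y y.2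

/-- Right multiplication by $a$ as an operator on a subspace $K$ invariant under it. -/
noncomputable def rmulS (K : Submodule ℂ A) (a : A) (h : ∀ y ∈ K, y * a ∈ K) :
    ↥K →L[ℂ] ↥K :=
  (((ContinuousLinearMap.mul ℂ A).flip a).comp K.subtypeL).codRestrict K fun y => h y y.2

section helpers
variable {A : Type*} [NormedRing A] [NormedAlgebra ℂ A]

lemma rmulS_coe (K : Submodule ℂ A) (a : A) (h : ∀ y ∈ K, y * a ∈ K) (k : ↥K) :
    ((rmulS K a h k : ↥K) : A) = (k : A) * a := rfl

lemma lmulS_coe (K : Submodule ℂ A) (a : A) (h : ∀ y ∈ K, a * y ∈ K) (k : ↥K) :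
    ((lmulS K a h k : ↥K) : A) = a * (k : A) := rfl

lemma idealBimod_dual_l_apply (J : Submodule ℂ A)
    (hJL : ∀ a : A, ∀ x ∈ J, a * x ∈ J) (hJR : ∀ a : A, ∀ x ∈ J, x * a ∈ J)
    (a : A) (φ : ↥J →L[ℂ] ℂ) (j : ↥J) :
    (idealBimod J hJL hJR).dual.l a φ j = φ ⟨(j : A) * a, hJR a _ j.2⟩ := rfl

lemma idealBimod_dual_r_apply (J : Submodule ℂ A)
    (hJL : ∀ a : A, ∀ x ∈ J, a * x ∈ J) (hJR : ∀ a : A, ∀ x ∈ J, x * a ∈ J)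
    (a : A) (φ : ↥J →L[ℂ] ℂ) (j : ↥J) :
    (idealBimod J hJL hJR).dual.r a φ j = φ ⟨a * (j : A), hJL a _ j.2⟩ := rfl

end helpers

set_option maxHeartbeats 2000000 in
theorem stmt_17
    {A : Type*} [NormedRing A] [NormedAlgebra ℂ A] [CompleteSpace A]
    (I : Submodule ℂ A) (hIc : IsClosed (I : Set A))
    (hIL : ∀ a : A, ∀ x ∈ I, a * x ∈ I) (hIR : ∀ a : A, ∀ x ∈ I, x * a ∈ I)
    -- $I$ has a bounded approximate identity
    (ι : Type*) (p : Filter ι) [p.NeBot] (e : ι → ↥I)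
    (hb : ∃ C : ℝ, ∀ i, ‖e i‖ ≤ C)
    (hai : ∀ x : ↥I, Tendsto (fun i => (e i : A) * (x : A)) p (𝓝 (x : A)) ∧
                     Tendsto (fun i => (x : A) * (e i : A)) p (𝓝 (x : A)))
    -- $I$ is ideally amenable: for every closed ideal $K$ of $I$, $H^1(I, K^*) = 0$
    (hIam : ∀ (K : Submodule ℂ A), IsClosed (K : Set A) → K ≤ I →
        ∀ (hKL : ∀ x ∈ I, ∀ y ∈ K, x * y ∈ K) (hKR : ∀ x ∈ I, ∀ y ∈ K, y * x ∈ K),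
        ∀ D : ↥I →L[ℂ] (↥K →L[ℂ] ℂ),
          (∀ x y : ↥I, D ⟨(x : A) * (y : A), hIL x y y.2⟩ =
              (D y).comp (rmulS K (x : A) (fun z hz => hKR x x.2 z hz)) +
              (D x).comp (lmulS K (y : A) (fun z hz => hKL y y.2 z hz))) →
          ∃ f : ↥K →L[ℂ] ℂ, ∀ x : ↥I,
            D x = f.comp (rmulS K (x : A) (fun z hz => hKR x x.2 z hz)) -
                  f.comp (lmulS K (x : A) (fun z hz => hKL x x.2 z hz)))
    -- $A/I$ is ideally amenable: for every closed ideal $L/I$ of $A/I$, $H^1(A/I, (L/I)^*) = 0$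
    (hQam : ∀ (L : Submodule ℂ A), IsClosed (L : Set A) → I ≤ L →
        ∀ (hLL : ∀ a : A, ∀ x ∈ L, a * x ∈ L) (hLR : ∀ a : A, ∀ x ∈ L, x * a ∈ L),
        ∀ D : A →L[ℂ] (↥L →L[ℂ] ℂ),
          IsDerivation (idealBimod L hLL hLR).dual D →
          (∀ x : A, x ∈ I → D x = 0) →
          (∀ (a : A) (x : ↥L), (x : A) ∈ I → D a x = 0) →
          ∃ f : ↥L →L[ℂ] ℂ, (∀ x : ↥L, (x : A) ∈ I → f x = 0) ∧
            ∀ a, D a = (idealBimod L hLL hLR).dual.l a f - (idealBimod L hLL hLR).dual.r a f) :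
    -- then $A$ is ideally amenable
    ∀ (J : Submodule ℂ A) (hJc : IsClosed (J : Set A))
      (hJL : ∀ a : A, ∀ x ∈ J, a * x ∈ J) (hJR : ∀ a : A, ∀ x ∈ J, x * a ∈ J),
      ∀ D : A →L[ℂ] (↥J →L[ℂ] ℂ),
        IsDerivation (idealBimod J hJL hJR).dual D → IsInner (idealBimod J hJL hJR).dual D := by
  intro J hJc hJL hJR D hder
  classical
  obtain ⟨C0, hC0⟩ := hb
  set C : ℝ := max C0 0 with hCdef
  have hC : ∀ i, ‖(e i : A)‖ ≤ C := fun i => le_max_of_le_left (hC0 i)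
  have h1C : (0:ℝ) ≤ 1 + C := by
    have : (0:ℝ) ≤ C := le_max_right _ _
    linarith
  -- the ideal K = J ⊓ I of I
  set K : Submodule ℂ A := J ⊓ I with hKdef
  have hKc : IsClosed (K : Set A) := by
    have : (K : Set A) = (J : Set A) ∩ (I : Set A) := rfl
    rw [this]; exact hJc.inter hIc
  have hKI : K ≤ I := inf_le_right
  have hKJ : K ≤ J := inf_le_left
  have hKmem : ∀ u : A, u ∈ J → u ∈ I → u ∈ K := fun u h1 h2 => Submodule.mem_inf.mpr ⟨h1, h2⟩
  have hKL : ∀ x ∈ I, ∀ y ∈ K, x * y ∈ K := fun x hx y hy =>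
    hKmem _ (hJL x y (hKJ hy)) (hIL x y (hKI hy))
  have hKR : ∀ x ∈ I, ∀ y ∈ K, y * x ∈ K := fun x hx y hy =>
    hKmem _ (hJR x y (hKJ hy)) (hIR x y (hKI hy))
  -- elementwise form of the derivation property of D
  have hDel : ∀ (a b : A) (j : ↥J), D (a * b) j =
      D b ⟨(j : A) * a, hJR a _ j.2⟩ + D a ⟨b * (j : A), hJL b _ j.2⟩ := by
    intro a b j
    rw [hder a b]
    rfl
  -- the restricted derivation D₁ : I → K*
  have hincl : ∀ k : ↥K, (k : A) ∈ J := fun k => hKJ k.2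
  obtain ⟨D₁, hD₁⟩ : ∃ D₁ : ↥I →L[ℂ] (↥K →L[ℂ] ℂ), ∀ (x : ↥I) (k : ↥K),
      D₁ x k = D x ⟨(k : A), hincl k⟩ :=
    ⟨((compL ℂ ↥K ↥J ℂ).flip (K.subtypeL.codRestrict J hincl)).comp
      (D.comp I.subtypeL), fun x k => rfl⟩
  have hD₁der : ∀ x y : ↥I, D₁ ⟨(x : A) * (y : A), hIL x y y.2⟩ =
      (D₁ y).comp (rmulS K (x : A) (fun z hz => hKR x x.2 z hz)) +
      (D₁ x).comp (lmulS K (y : A) (fun z hz => hKL y y.2 z hz)) := by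
    intro x y
    ext k
    rw [ContinuousLinearMap.add_apply, ContinuousLinearMap.comp_apply,
      ContinuousLinearMap.comp_apply, hD₁, hD₁, hD₁]
    exact hDel (x : A) (y : A) ⟨(k : A), hincl k⟩
  obtain ⟨f, hf⟩ := hIam K hKc hKI hKL hKR D₁ hD₁der
  -- total version of f
  set f₁ : A → ℂ := fun u => if hu : u ∈ K then f ⟨u, hu⟩ else 0 with hf₁def
  have hf₁mk : ∀ (u : A) (hu : u ∈ K), f ⟨u, hu⟩ = f₁ u := by
    intro u hu
    simp only [hf₁def]
    exact (show (if hu : u ∈ K then f ⟨u, hu⟩ else 0) = f ⟨u, hu⟩ from dif_pos hu).symm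
  have hf₁z : ∀ z : ↥K, f z = f₁ (z : A) := fun z => hf₁mk (z : A) z.2
  -- Hahn-Banach extension g of f to J*
  set K' : Submodule ℂ ↥J := K.comap J.subtype with hK'def
  obtain ⟨g, hg0, -⟩ := exists_extension_norm_eq K'
    (f.comp ((J.subtypeL.comp K'.subtypeL).codRestrict K (fun z => z.2)))
  have hg : ∀ (j : ↥J) (hj : (j : A) ∈ K), g j = f ⟨(j : A), hj⟩ := fun j hj => hg0 ⟨j, hj⟩
  -- total version of g
  set g' : A → ℂ := fun u => if hu : u ∈ J then g ⟨u, hu⟩ else 0 with hg'def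
  have hg'mk : ∀ (u : A) (hu : u ∈ J), g ⟨u, hu⟩ = g' u := by
    intro u hu
    simp only [hg'def]
    exact (show (if hu : u ∈ J then g ⟨u, hu⟩ else 0) = g ⟨u, hu⟩ from dif_pos hu).symm
  have hgf : ∀ (u : A), u ∈ K → g' u = f₁ u := by
    intro u hu
    rw [← hg'mk u (hKJ hu), ← hf₁mk u hu]
    exact hg ⟨u, hKJ hu⟩ hu
  -- the modified derivation D' = D - ad g
  obtain ⟨D', hD'⟩ : ∃ D' : A →L[ℂ] (↥J →L[ℂ] ℂ), ∀ (a : A) (j : ↥J),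
      D' a j = D a j - g' ((j : A) * a) + g' (a * (j : A)) := by
    have hgmk' : ∀ (u : A) (hu : u ∈ J), g ⟨u, hu⟩ = g' u := hg'mk
    refine ⟨D - LinearMap.mkContinuous₂ (LinearMap.mk₂ ℂ
      (fun (a : A) (j : ↥J) => g' ((j : A) * a) - g' (a * (j : A)))
      ?_ ?_ ?_ ?_) (2 * ‖g‖) ?_, ?_⟩
    · intro a₁ a₂ j
      rw [← hg'mk _ (hJR (a₁ + a₂) _ j.2), ← hg'mk _ (hJL (a₁ + a₂) _ j.2),
        ← hg'mk _ (hJR a₁ _ j.2), ← hg'mk _ (hJL a₁ _ j.2),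
        ← hg'mk _ (hJR a₂ _ j.2), ← hg'mk _ (hJL a₂ _ j.2)]
      have e1 : (⟨(j : A) * (a₁ + a₂), hJR (a₁ + a₂) _ j.2⟩ : ↥J)
          = ⟨(j : A) * a₁, hJR a₁ _ j.2⟩ + ⟨(j : A) * a₂, hJR a₂ _ j.2⟩ :=
        Subtype.ext (mul_add _ _ _)
      have e2 : (⟨(a₁ + a₂) * (j : A), hJL (a₁ + a₂) _ j.2⟩ : ↥J)
          = ⟨a₁ * (j : A), hJL a₁ _ j.2⟩ + ⟨a₂ * (j : A), hJL a₂ _ j.2⟩ :=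
        Subtype.ext (add_mul _ _ _)
      rw [e1, e2, map_add, map_add]
      ring
    · intro c a j
      rw [← hg'mk _ (hJR (c • a) _ j.2), ← hg'mk _ (hJL (c • a) _ j.2),
        ← hg'mk _ (hJR a _ j.2), ← hg'mk _ (hJL a _ j.2)]
      have e1 : (⟨(j : A) * (c • a), hJR (c • a) _ j.2⟩ : ↥J)
          = c • ⟨(j : A) * a, hJR a _ j.2⟩ := Subtype.ext (mul_smul_comm _ _ _)
      have e2 : (⟨(c • a) * (j : A), hJL (c • a) _ j.2⟩ : ↥J)
          = c • ⟨a * (j : A), hJL a _ j.2⟩ := Subtype.ext (smul_mul_assoc _ _ _)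
      rw [e1, e2, map_smul, map_smul]
      simp only [smul_eq_mul]
      ring
    · intro a j₁ j₂
      rw [← hg'mk _ (hJR a _ (j₁ + j₂).2), ← hg'mk _ (hJL a _ (j₁ + j₂).2),
        ← hg'mk _ (hJR a _ j₁.2), ← hg'mk _ (hJL a _ j₁.2),
        ← hg'mk _ (hJR a _ j₂.2), ← hg'mk _ (hJL a _ j₂.2)]
      have e1 : (⟨((j₁ + j₂ : ↥J) : A) * a, hJR a _ (j₁ + j₂).2⟩ : ↥J)
          = ⟨(j₁ : A) * a, hJR a _ j₁.2⟩ + ⟨(j₂ : A) * a, hJR a _ j₂.2⟩ := by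
        apply Subtype.ext
        push_cast
        rw [add_mul]
      have e2 : (⟨a * ((j₁ + j₂ : ↥J) : A), hJL a _ (j₁ + j₂).2⟩ : ↥J)
          = ⟨a * (j₁ : A), hJL a _ j₁.2⟩ + ⟨a * (j₂ : A), hJL a _ j₂.2⟩ := by
        apply Subtype.ext
        push_cast
        rw [mul_add]
      rw [e1, e2, map_add, map_add]
      ring
    · intro c a j
      rw [← hg'mk _ (hJR a _ (c • j).2), ← hg'mk _ (hJL a _ (c • j).2),
        ← hg'mk _ (hJR a _ j.2), ← hg'mk _ (hJL a _ j.2)]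
      have e1 : (⟨((c • j : ↥J) : A) * a, hJR a _ (c • j).2⟩ : ↥J)
          = c • ⟨(j : A) * a, hJR a _ j.2⟩ := by
        apply Subtype.ext
        push_cast
        rw [smul_mul_assoc]
      have e2 : (⟨a * ((c • j : ↥J) : A), hJL a _ (c • j).2⟩ : ↥J)
          = c • ⟨a * (j : A), hJL a _ j.2⟩ := by
        apply Subtype.ext
        push_cast
        rw [mul_smul_comm]
      rw [e1, e2, map_smul, map_smul]
      simp only [smul_eq_mul]
      ring
    · intro a j
      rw [LinearMap.mk₂_apply, ← hg'mk _ (hJR a _ j.2), ← hg'mk _ (hJL a _ j.2)]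
      have h1 := g.le_opNorm (⟨(j : A) * a, hJR a _ j.2⟩ : ↥J)
      have h2 := g.le_opNorm (⟨a * (j : A), hJL a _ j.2⟩ : ↥J)
      have h3 : ‖(j : A) * a‖ ≤ ‖(j : A)‖ * ‖a‖ := norm_mul_le _ _
      have h4 : ‖a * (j : A)‖ ≤ ‖a‖ * ‖(j : A)‖ := norm_mul_le _ _
      have h5 := norm_sub_le (g (⟨(j : A) * a, hJR a _ j.2⟩ : ↥J))
        (g (⟨a * (j : A), hJL a _ j.2⟩ : ↥J))
      have hgn : (0:ℝ) ≤ ‖g‖ := norm_nonneg g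
      simp only [Submodule.coe_norm] at h1 h2 ⊢
      nlinarith [mul_le_mul_of_nonneg_left h3 hgn, mul_le_mul_of_nonneg_left h4 hgn]
    · intro a j
      simp only [ContinuousLinearMap.sub_apply, LinearMap.mkContinuous₂_apply,
        LinearMap.mk₂_apply]
      ring
  -- elementwise derivation property of D'
  have hder' : ∀ (a b : A) (j : ↥J), D' (a * b) j =
      D' b ⟨(j : A) * a, hJR a _ j.2⟩ + D' a ⟨b * (j : A), hJL b _ j.2⟩ := by
    intro a b j
    rw [hD', hD', hD', hDel]
    dsimp only
    simp only [mul_assoc]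
    ring
  -- Step D : D' x kills K for x ∈ I
  have hvanK : ∀ (x : A), x ∈ I → ∀ (j : ↥J), (j : A) ∈ I → D' x j = 0 := by
    intro x hx j hj
    have hjK : (j : A) ∈ K := hKmem _ j.2 hj
    have h1 : D x j = f₁ ((j : A) * x) - f₁ (x * (j : A)) := by
      calc D x j = D₁ ⟨x, hx⟩ ⟨(j : A), hjK⟩ := (hD₁ ⟨x, hx⟩ ⟨(j : A), hjK⟩).symm
        _ = ((f.comp (rmulS K ((⟨x, hx⟩ : ↥I) : A) (fun z hz => hKR _ (⟨x, hx⟩ : ↥I).2 z hz)))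
            - (f.comp (lmulS K ((⟨x, hx⟩ : ↥I) : A) (fun z hz => hKL _ (⟨x, hx⟩ : ↥I).2 z hz))))
            ⟨(j : A), hjK⟩ := by rw [hf ⟨x, hx⟩]
        _ = f₁ ((j : A) * x) - f₁ (x * (j : A)) := by
            simp only [ContinuousLinearMap.sub_apply, ContinuousLinearMap.comp_apply, hf₁z,
              rmulS_coe, lmulS_coe]
    rw [hD', h1, hgf _ (hKR x hx _ hjK), hgf _ (hKL x hx _ hjK)]
    ring
  -- Step E : D' vanishes on I
  have hvanI : ∀ (x : A), x ∈ I → D' x = 0 := by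
    intro x hx
    ext j
    have h0 : ∀ i : ι, D' ((e i : A) * x) j = 0 := by
      intro i
      rw [hder']
      rw [hvanK x hx _ (hIL _ _ (e i).2), hvanK _ (e i).2 _ (hIR _ _ hx)]
      ring
    have hcont : Tendsto (fun i => D' ((e i : A) * x) j) p (𝓝 (D' x j)) := by
      have h1 : Tendsto (fun i => (e i : A) * x) p (𝓝 x) := (hai ⟨x, hx⟩).1
      exact ((D'.flip j).continuous.tendsto x).comp h1
    simp only [h0] at hcont
    rw [ContinuousLinearMap.zero_apply]
    exact tendsto_nhds_unique hcont tendsto_const_nhds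
  -- Step F : D' a kills elements of J lying in I
  have hvanK2 : ∀ (a : A) (j : ↥J), (j : A) ∈ I → D' a j = 0 := by
    intro a j hj
    have h0 : ∀ (i : ι), D' a ⟨(e i : A) * (j : A), hJL _ _ j.2⟩ = 0 := by
      intro i
      have h1 := hder' a (e i : A) j
      rw [hvanI _ (hIL a _ (e i).2), hvanI _ (e i).2] at h1
      simpa using h1.symm
    have hlim : Tendsto (fun i => (⟨(e i : A) * (j : A), hJL _ _ j.2⟩ : ↥J)) p (𝓝 j) := by
      rw [Topology.IsInducing.subtypeVal.tendsto_nhds_iff]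
      exact (hai ⟨(j : A), hj⟩).1
    have hcont := ((D' a).continuous.tendsto j).comp hlim
    have heq : ((D' a) ∘ (fun i => (⟨(e i : A) * (j : A), hJL _ _ j.2⟩ : ↥J)))
        = fun _ : ι => (0 : ℂ) := by
      funext i
      exact h0 i
    rw [heq] at hcont
    exact (tendsto_nhds_unique hcont tendsto_const_nhds).symm ▸ rfl
  -- key approximation lemma
  have happrox : ∀ (j : ↥J) (x : ↥I) (ε : ℝ), 0 < ε →
      ∃ k ∈ K, ‖(j : A) - k‖ ≤ (1 + C) * ‖(j : A) + (x : A)‖ + ε := by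
    intro j x ε hε
    obtain ⟨i, hi⟩ := ((Metric.tendsto_nhds.mp (hai x).1) ε hε).exists
    refine ⟨(e i : A) * (j : A), hKmem _ (hJL _ _ j.2) (hIR _ _ (e i).2), ?_⟩
    have key : (j : A) - (e i : A) * (j : A) =
        (((j : A) + (x : A)) - (e i : A) * ((j : A) + (x : A)))
          - ((x : A) - (e i : A) * (x : A)) := by noncomm_ring
    rw [key]
    have hn1 : ‖((j : A) + (x : A)) - (e i : A) * ((j : A) + (x : A))‖
        ≤ (1 + C) * ‖(j : A) + (x : A)‖ := by
      have ha := norm_sub_le ((j : A) + (x : A)) ((e i : A) * ((j : A) + (x : A)))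
      have hbm := norm_mul_le (e i : A) ((j : A) + (x : A))
      have hc := hC i
      have hnn := norm_nonneg ((j : A) + (x : A))
      nlinarith
    have hn2 : ‖(x : A) - (e i : A) * (x : A)‖ ≤ ε := by
      rw [← dist_eq_norm, dist_comm]
      exact hi.le
    have := norm_sub_le (((j : A) + (x : A)) - (e i : A) * ((j : A) + (x : A)))
      ((x : A) - (e i : A) * (x : A))
    linarith
  -- L = J ⊔ I is closed
  have hLc : IsClosed ((J ⊔ I : Submodule ℂ A) : Set A) := by
    apply isClosed_of_closure_subset
    intro a ha
    have hsel : ∀ n : ℕ, ∃ (j : ↥J) (x : ↥I), ‖a - ((j : A) + (x : A))‖ < (1/2 : ℝ)^n := by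
      intro n
      obtain ⟨b, hb, hd⟩ := Metric.mem_closure_iff.mp ha ((1/2 : ℝ)^n) (by positivity)
      rw [SetLike.mem_coe, Submodule.mem_sup] at hb
      obtain ⟨y, hy, z, hz, hyz⟩ := hb
      refine ⟨⟨y, hy⟩, ⟨z, hz⟩, ?_⟩
      show ‖a - (y + z)‖ < (1/2 : ℝ)^n
      rw [hyz, ← dist_eq_norm]
      exact hd
    choose jj xx hjx using hsel
    have hdiff : ∀ n, ‖((jj (n+1) : A) - (jj n : A)) + ((xx (n+1) : A) - (xx n : A))‖
        ≤ 3 * (1/2 : ℝ)^n := by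
      intro n
      have h1 := hjx n
      have h2 := hjx (n+1)
      have key : ((jj (n+1) : A) - (jj n : A)) + ((xx (n+1) : A) - (xx n : A))
          = (a - ((jj n : A) + (xx n : A))) - (a - ((jj (n+1) : A) + (xx (n+1) : A))) := by
        abel
      rw [key]
      have h3 := norm_sub_le (a - ((jj n : A) + (xx n : A)))
        (a - ((jj (n+1) : A) + (xx (n+1) : A)))
      have hp : (1/2 : ℝ)^(n+1) ≤ (1/2 : ℝ)^n :=
        pow_le_pow_of_le_one (by norm_num) (by norm_num) (Nat.le_succ n)
      have hposn : (0:ℝ) ≤ (1/2 : ℝ)^n := by positivity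
      linarith
    have hkex : ∀ n : ℕ, ∃ k ∈ K,
        ‖((jj (n+1) : A) - (jj n : A)) - k‖ ≤ ((1 + C) * 3 + 1) * (1/2 : ℝ)^n := by
      intro n
      obtain ⟨k, hk, hkb⟩ := happrox (jj (n+1) - jj n) (xx (n+1) - xx n) ((1/2 : ℝ)^n)
        (by positivity)
      refine ⟨k, hk, ?_⟩
      have e1 : ((jj (n+1) - jj n : ↥J) : A) = (jj (n+1) : A) - (jj n : A) := by push_cast; ring
      have e2 : ((xx (n+1) - xx n : ↥I) : A) = (xx (n+1) : A) - (xx n : A) := by push_cast; ring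
      rw [e1, e2] at hkb
      have h2 := hdiff n
      have h3 := mul_le_mul_of_nonneg_left h2 h1C
      have hpow : (0:ℝ) ≤ (1/2 : ℝ)^n := by positivity
      nlinarith
    choose kk hkK hkb using hkex
    have hsK : ∀ n : ℕ, (∑ m ∈ Finset.range n, kk m) ∈ K :=
      fun n => Submodule.sum_mem K (fun m _ => hkK m)
    have hcau : CauchySeq (fun n => (jj n : A) - ∑ m ∈ Finset.range n, kk m) := by
      apply cauchySeq_of_le_geometric (1/2 : ℝ) ((1 + C) * 3 + 1) (by norm_num)
      intro n
      rw [dist_eq_norm]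
      have e : ((jj n : A) - ∑ m ∈ Finset.range n, kk m)
          - ((jj (n+1) : A) - ∑ m ∈ Finset.range (n+1), kk m)
          = -(((jj (n+1) : A) - (jj n : A)) - kk n) := by
        rw [Finset.sum_range_succ]
        abel
      rw [e, norm_neg]
      exact hkb n
    obtain ⟨b, hbl⟩ := cauchySeq_tendsto_of_complete hcau
    have hbJ : b ∈ J := hJc.mem_of_tendsto hbl (Filter.Eventually.of_forall fun n =>
      J.sub_mem (jj n).2 (hKJ (hsK n)))
    have hlsum : Tendsto (fun n => (jj n : A) + (xx n : A)) atTop (𝓝 a) := by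
      have h0 : Tendsto (fun n => a - ((jj n : A) + (xx n : A))) atTop (𝓝 0) :=
        squeeze_zero_norm (fun n => (hjx n).le)
          (tendsto_pow_atTop_nhds_zero_of_lt_one (by norm_num) (by norm_num))
      have h1 := (tendsto_const_nhds : Tendsto (fun _ : ℕ => a) atTop (𝓝 a)).sub h0
      simp only [sub_sub_cancel, sub_zero] at h1
      exact h1
    have hxl : Tendsto (fun n => ((jj n : A) + (xx n : A))
        - ((jj n : A) - ∑ m ∈ Finset.range n, kk m)) atTop (𝓝 (a - b)) := hlsum.sub hbl
    have haI : a - b ∈ I := by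
      refine hIc.mem_of_tendsto hxl (Filter.Eventually.of_forall fun n => ?_)
      have e : ((jj n : A) + (xx n : A)) - ((jj n : A) - ∑ m ∈ Finset.range n, kk m)
          = (xx n : A) + ∑ m ∈ Finset.range n, kk m := by abel
      rw [e]
      exact I.add_mem (xx n).2 (hKI (hsK n))
    rw [SetLike.mem_coe]
    exact Submodule.mem_sup.mpr ⟨b, hbJ, a - b, haI, by abel⟩
  -- L and its ideal structure
  have hIleL : I ≤ J ⊔ I := le_sup_right
  have hLL : ∀ a : A, ∀ x ∈ (J ⊔ I : Submodule ℂ A), a * x ∈ (J ⊔ I : Submodule ℂ A) := by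
    intro a x hx
    obtain ⟨y, hy, z, hz, rfl⟩ := Submodule.mem_sup.mp hx
    rw [mul_add]
    exact Submodule.mem_sup.mpr ⟨a * y, hJL a y hy, a * z, hIL a z hz, rfl⟩
  have hLR : ∀ a : A, ∀ x ∈ (J ⊔ I : Submodule ℂ A), x * a ∈ (J ⊔ I : Submodule ℂ A) := by
    intro a x hx
    obtain ⟨y, hy, z, hz, rfl⟩ := Submodule.mem_sup.mp hx
    rw [add_mul]
    exact Submodule.mem_sup.mpr ⟨y * a, hJR a y hy, z * a, hIR a z hz, rfl⟩
  -- decomposition chooser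
  have hdecomp : ∀ ℓ : ↥(J ⊔ I : Submodule ℂ A), ∃ jx : ↥J × ↥I,
      ((jx.1 : A) + (jx.2 : A)) = (ℓ : A) := by
    intro ℓ
    obtain ⟨y, hy, z, hz, h⟩ := Submodule.mem_sup.mp ℓ.2
    exact ⟨(⟨y, hy⟩, ⟨z, hz⟩), h⟩
  choose pk hpk using hdecomp
  -- well-definedness of the L-extension
  have hwd : ∀ (a : A) (ℓ : ↥(J ⊔ I : Submodule ℂ A)) (j : ↥J) (x : ↥I),
      (j : A) + (x : A) = (ℓ : A) → D' a ((pk ℓ).1) = D' a j := by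
    intro a ℓ j x h
    have h3 : ((pk ℓ).1 : A) - (j : A) = (x : A) - ((pk ℓ).2 : A) := by
      have h5 := hpk ℓ
      rw [← h] at h5
      rw [sub_eq_sub_iff_add_eq_add, h5]
      abel
    have h2 : (((pk ℓ).1 - j : ↥J) : A) ∈ I := by
      have e : (((pk ℓ).1 - j : ↥J) : A) = ((pk ℓ).1 : A) - (j : A) := by push_cast; ring
      rw [e, h3]
      exact I.sub_mem x.2 (pk ℓ).2.2
    have h4 : D' a ((pk ℓ).1 - j) = 0 := hvanK2 a _ h2
    rw [map_sub] at h4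
    exact sub_eq_zero.mp h4
  -- boundedness of the L-extension
  have hbdd : ∀ (a : A) (ℓ : ↥(J ⊔ I : Submodule ℂ A)),
      ‖D' a ((pk ℓ).1)‖ ≤ (1 + C) * ‖D' a‖ * ‖(ℓ : A)‖ := by
    intro a ℓ
    have hεb : ∀ ε : ℝ, 0 < ε →
        ‖D' a ((pk ℓ).1)‖ ≤ (1 + C) * ‖D' a‖ * ‖(ℓ : A)‖ + ‖D' a‖ * ε := by
      intro ε hε
      obtain ⟨k, hkK', hkb⟩ := happrox (pk ℓ).1 (pk ℓ).2 ε hε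
      have h0 : D' a ((pk ℓ).1 - ⟨k, hKJ hkK'⟩) = D' a ((pk ℓ).1) := by
        rw [map_sub, hvanK2 a ⟨k, hKJ hkK'⟩ (hKI hkK'), sub_zero]
      have h1 : ‖D' a ((pk ℓ).1)‖ ≤ ‖D' a‖ * ‖((pk ℓ).1 : A) - k‖ := by
        rw [← h0]
        exact (D' a).le_opNorm _
      have h2 : ‖((pk ℓ).1 : A) - k‖ ≤ (1 + C) * ‖(ℓ : A)‖ + ε := by
        rw [hpk ℓ] at hkb
        exact hkb
      calc ‖D' a ((pk ℓ).1)‖ ≤ ‖D' a‖ * ((1 + C) * ‖(ℓ : A)‖ + ε) :=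
            h1.trans (mul_le_mul_of_nonneg_left h2 (D' a).opNorm_nonneg)
        _ = (1 + C) * ‖D' a‖ * ‖(ℓ : A)‖ + ‖D' a‖ * ε := by ring
    rcases eq_or_lt_of_le (D' a).opNorm_nonneg with hz | hpos
    · have h1 : ‖D' a ((pk ℓ).1)‖ ≤ ‖D' a‖ * ‖(pk ℓ).1‖ := (D' a).le_opNorm _
      rw [← hz, zero_mul] at h1
      have h2 : (0:ℝ) ≤ (1 + C) * ‖D' a‖ * ‖(ℓ : A)‖ := by
        rw [← hz]
        simp
      linarith
    · apply le_of_forall_pos_le_add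
      intro ε' hε'
      have := hεb (ε' / ‖D' a‖) (div_pos hε' hpos)
      rw [show ‖D' a‖ * (ε' / ‖D' a‖) = ε' from by field_simp] at this
      exact this
  -- D'' : the extension of D' to L*
  obtain ⟨M, hM0, hM⟩ : ∃ M, 0 < M ∧ ∀ a : A, ‖D' a‖ ≤ M * ‖a‖ :=
    SemilinearMapClass.bound_of_continuous (σ₁₂ := RingHom.id ℂ)
      ((D' : A →ₗ[ℂ] (↥J →L[ℂ] ℂ))) (D'.continuous)
  obtain ⟨D'', hD''⟩ : ∃ D'' : A →L[ℂ] (↥(J ⊔ I : Submodule ℂ A) →L[ℂ] ℂ),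
      ∀ (a : A) (ℓ : ↥(J ⊔ I : Submodule ℂ A)), D'' a ℓ = D' a ((pk ℓ).1) := by
    refine ⟨LinearMap.mkContinuous₂ (LinearMap.mk₂ ℂ
      (fun (a : A) (ℓ : ↥(J ⊔ I : Submodule ℂ A)) => D' a ((pk ℓ).1))
      ?_ ?_ ?_ ?_) ((1 + C) * M) ?_, fun a ℓ => rfl⟩
    · intro a₁ a₂ ℓ
      rw [map_add]
      rfl
    · intro c a ℓ
      rw [map_smul]
      rfl
    · intro a ℓ₁ ℓ₂
      rw [hwd a (ℓ₁ + ℓ₂) ((pk ℓ₁).1 + (pk ℓ₂).1) ((pk ℓ₁).2 + (pk ℓ₂).2)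
        (by push_cast; rw [← hpk ℓ₁, ← hpk ℓ₂]; abel), map_add]
    · intro c a ℓ
      rw [hwd a (c • ℓ) (c • (pk ℓ).1) (c • (pk ℓ).2)
        (by push_cast; rw [← hpk ℓ]; rw [smul_add]), map_smul]
    · intro a ℓ
      dsimp only [LinearMap.mk₂_apply]
      calc ‖D' a ((pk ℓ).1)‖ ≤ (1 + C) * ‖D' a‖ * ‖(ℓ : A)‖ := hbdd a ℓ
        _ ≤ (1 + C) * (M * ‖a‖) * ‖(ℓ : A)‖ :=
            mul_le_mul_of_nonneg_right
              (mul_le_mul_of_nonneg_left (hM a) h1C) (norm_nonneg _)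
        _ = (1 + C) * M * ‖a‖ * ‖(ℓ : A)‖ := by ring
  -- D'' is a derivation
  have hD''der : IsDerivation (idealBimod (J ⊔ I : Submodule ℂ A) hLL hLR).dual D'' := by
    intro a b
    ext ℓ
    rw [ContinuousLinearMap.add_apply]
    show D'' (a * b) ℓ = D'' b ⟨(ℓ : A) * a, hLR a _ ℓ.2⟩ + D'' a ⟨b * (ℓ : A), hLL b _ ℓ.2⟩
    rw [hD'', hD'', hD'']
    rw [hwd b ⟨(ℓ : A) * a, hLR a _ ℓ.2⟩ ⟨((pk ℓ).1 : A) * a, hJR a _ (pk ℓ).1.2⟩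
      ⟨((pk ℓ).2 : A) * a, hIR a _ (pk ℓ).2.2⟩ (by rw [← add_mul, hpk ℓ])]
    rw [hwd a ⟨b * (ℓ : A), hLL b _ ℓ.2⟩ ⟨b * ((pk ℓ).1 : A), hJL b _ (pk ℓ).1.2⟩
      ⟨b * ((pk ℓ).2 : A), hIL b _ (pk ℓ).2.2⟩ (by rw [← mul_add, hpk ℓ])]
    exact hder' a b (pk ℓ).1
  -- D'' vanishes on I
  have hv1 : ∀ x : A, x ∈ I → D'' x = 0 := by
    intro x hx
    ext ℓ
    rw [hD'', hvanI x hx]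
    simp only [ContinuousLinearMap.zero_apply]
  have hv2 : ∀ (a : A) (ℓ : ↥(J ⊔ I : Submodule ℂ A)), (ℓ : A) ∈ I → D'' a ℓ = 0 := by
    intro a ℓ hℓ
    rw [hD'', hwd a ℓ 0 ⟨(ℓ : A), hℓ⟩ (by simp), map_zero]
  obtain ⟨F, hF0, hFin⟩ := hQam (J ⊔ I) hLc hIleL hLL hLR D'' hD''der hv1 hv2
  -- total version of F
  set F' : A → ℂ := fun u => if hu : u ∈ (J ⊔ I : Submodule ℂ A) then F ⟨u, hu⟩ else 0
    with hF'def
  have hF'mk : ∀ (u : A) (hu : u ∈ (J ⊔ I : Submodule ℂ A)), F ⟨u, hu⟩ = F' u := by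
    intro u hu
    simp only [hF'def]
    exact (show (if hu : u ∈ (J ⊔ I : Submodule ℂ A) then F ⟨u, hu⟩ else 0) = F ⟨u, hu⟩ from dif_pos hu).symm
  -- final verification
  refine ⟨g + F.comp (J.subtypeL.codRestrict (J ⊔ I) (fun j => Submodule.mem_sup_left j.2)),
      fun a => ?_⟩
  ext j
  rw [ContinuousLinearMap.sub_apply]
  show D a j = (g + F.comp (J.subtypeL.codRestrict (J ⊔ I)
        (fun j => Submodule.mem_sup_left j.2))) ⟨(j : A) * a, hJR a _ j.2⟩
      - (g + F.comp (J.subtypeL.codRestrict (J ⊔ I)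
        (fun j => Submodule.mem_sup_left j.2))) ⟨a * (j : A), hJL a _ j.2⟩
  have h2 : ∀ (u : A) (hu : u ∈ J),
      (g + F.comp (J.subtypeL.codRestrict (J ⊔ I) (fun j => Submodule.mem_sup_left j.2)))
        (⟨u, hu⟩ : ↥J) = g' u + F' u := by
    intro u hu
    rw [ContinuousLinearMap.add_apply, ContinuousLinearMap.comp_apply, hg'mk u hu]
    congr 1
    rw [show (J.subtypeL.codRestrict (J ⊔ I) (fun j => Submodule.mem_sup_left j.2))
        (⟨u, hu⟩ : ↥J) = (⟨u, Submodule.mem_sup_left hu⟩ : ↥(J ⊔ I : Submodule ℂ A)) from rfl]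
    exact hF'mk u (Submodule.mem_sup_left hu)
  have h1 : D' a j = F' ((j : A) * a) - F' (a * (j : A)) := by
    have hjL : (j : A) ∈ (J ⊔ I : Submodule ℂ A) := Submodule.mem_sup_left j.2
    calc D' a j = D'' a ⟨(j : A), hjL⟩ := by
          rw [hD'', hwd a ⟨(j : A), hjL⟩ j 0 (by simp)]
      _ = ((idealBimod (J ⊔ I : Submodule ℂ A) hLL hLR).dual.l a F
            - (idealBimod (J ⊔ I : Submodule ℂ A) hLL hLR).dual.r a F) ⟨(j : A), hjL⟩ := by
          rw [hFin a]
      _ = F ⟨(j : A) * a, hLR a _ hjL⟩ - F ⟨a * (j : A), hLL a _ hjL⟩ := rfl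
      _ = F' ((j : A) * a) - F' (a * (j : A)) := by
          rw [hF'mk _ (hLR a _ hjL), hF'mk _ (hLL a _ hjL)]
  have hDa : D a j = D' a j + g' ((j : A) * a) - g' (a * (j : A)) := by
    rw [hD' a j]
    ring
  rw [h2 _ (hJR a _ j.2), h2 _ (hJL a _ j.2), hDa, h1]
  ring

end Paper
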